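/- Let ε = K h² with K > 0, β > 0, and let D, D' ≥ 0 satisfy |D' - D| ≤ A h^4 and D ≤ B h². Then 1/(ε + D)^β = (1/(ε + D')^β)·(1 + r) with |r| ≤ M h² for some constant M depending only on K, A, B, β (for h small enough). -/

import Mathlib

open Real Set

lemma rpow_lip (β : ℝ) (hβ : 0 < β) (t : ℝ) (ht : t ∈ Set.Icc (1/2:ℝ) (3/2)) :
    |t ^ β - 1| ≤ (β * ((1/2:ℝ) ^ (β-1) + (3/2:ℝ) ^ (β-1))) * |t - 1| := by
  set C : ℝ := β * ((1/2:ℝ) ^ (β-1) + (3/2:ℝ) ^ (β-1)) with hC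
  have hconv : Convex ℝ (Set.Icc (1/2:ℝ) (3/2)) := convex_Icc _ _
  have hderiv : ∀ x ∈ Set.Icc (1/2:ℝ) (3/2),
      HasDerivWithinAt (fun y : ℝ => y ^ β) (β * x ^ (β-1)) (Set.Icc (1/2:ℝ) (3/2)) x := by
    intro x hx
    have hx0 : x ≠ 0 := by
      have := hx.1; positivity
    exact (Real.hasDerivAt_rpow_const (Or.inl hx0)).hasDerivWithinAt
  have hbound : ∀ x ∈ Set.Icc (1/2:ℝ) (3/2), ‖β * x ^ (β-1)‖ ≤ C := by
    intro x hx
    have hx0 : (0:ℝ) < x := lt_of_lt_of_le (by norm_num) hx.1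
    have hpow : x ^ (β-1) ≤ (1/2:ℝ) ^ (β-1) + (3/2:ℝ) ^ (β-1) := by
      rcases le_or_gt 0 (β - 1) with hb | hb
      · have h1 : x ^ (β-1) ≤ (3/2:ℝ) ^ (β-1) :=
          Real.rpow_le_rpow (le_of_lt hx0) hx.2 hb
        have h2 : (0:ℝ) ≤ (1/2:ℝ) ^ (β-1) := Real.rpow_nonneg (by norm_num) _
        linarith
      · have h1 : x ^ (β-1) ≤ (1/2:ℝ) ^ (β-1) :=
          Real.rpow_le_rpow_of_nonpos (by norm_num) hx.1 (le_of_lt hb)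
        have h2 : (0:ℝ) ≤ (3/2:ℝ) ^ (β-1) := Real.rpow_nonneg (by norm_num) _
        linarith
    have : ‖β * x ^ (β-1)‖ = β * x ^ (β-1) := by
      rw [Real.norm_eq_abs, abs_of_nonneg]
      positivity
    rw [this, hC]
    exact mul_le_mul_of_nonneg_left hpow (le_of_lt hβ)
  have h1 : (1:ℝ) ∈ Set.Icc (1/2:ℝ) (3/2) := by norm_num
  have := hconv.norm_image_sub_le_of_norm_hasDerivWithin_le hderiv hbound h1 ht
  simpa [Real.norm_eq_abs, Real.one_rpow] using this

theorem stmt16 (K A B β : ℝ) (hK : 0 < K) (hA : 0 < A) (hB : 0 < B) (hβ : 0 < β) :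
    ∃ M h0 : ℝ, 0 < h0 ∧ ∀ h D D' : ℝ, 0 < h → h < h0 → h < 1 →
      0 ≤ D → 0 ≤ D' → |D' - D| ≤ A * h ^ 4 → D ≤ B * h ^ 2 →
      ∃ r : ℝ, 1 / (K * h ^ 2 + D) ^ β = (1 / (K * h ^ 2 + D') ^ β) * (1 + r) ∧
        |r| ≤ M * h ^ 2 := by
  set C : ℝ := β * ((1/2:ℝ) ^ (β-1) + (3/2:ℝ) ^ (β-1)) with hCdef
  have hC0 : 0 ≤ C := by
    have := Real.rpow_nonneg (show (0:ℝ) ≤ 1/2 by norm_num) (β-1)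
    have := Real.rpow_nonneg (show (0:ℝ) ≤ 3/2 by norm_num) (β-1)
    positivity
  refine ⟨C * A / K, min 1 (Real.sqrt (K / (2 * A))), ?_, ?_⟩
  · have : 0 < Real.sqrt (K / (2 * A)) := Real.sqrt_pos.mpr (by positivity)
    exact lt_min (by norm_num) this
  intro h D D' hh hh0 hh1 hD hD' hDD hDB
  have hh2 : h ^ 2 < K / (2 * A) := by
    have hs : h < Real.sqrt (K / (2 * A)) := lt_of_lt_of_le hh0 (min_le_right _ _)
    calc h ^ 2 < (Real.sqrt (K / (2 * A))) ^ 2 := by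
          apply pow_lt_pow_left₀ hs (le_of_lt hh) two_ne_zero
        _ = K / (2 * A) := Real.sq_sqrt (by positivity)
  set x : ℝ := K * h ^ 2 + D with hxdef
  set y : ℝ := K * h ^ 2 + D' with hydef
  have hx0 : 0 < x := by positivity
  have hy0 : 0 < y := by positivity
  set t : ℝ := y / x with htdef
  have htsub : |t - 1| ≤ A / K * h ^ 2 := by
    have hyx : y - x = D' - D := by rw [hxdef, hydef]; ring
    have this1 : t - 1 = (D' - D) / x := by
      rw [htdef, div_sub_one hx0.ne', hyx]
    rw [this1, abs_div, abs_of_pos hx0]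
    rw [div_le_iff₀ hx0]
    calc |D' - D| ≤ A * h ^ 4 := hDD
      _ ≤ A / K * h ^ 2 * (K * h ^ 2) := by
          have : A / K * h ^ 2 * (K * h ^ 2) = A * h ^ 4 := by
            field_simp
          rw [this]
      _ ≤ A / K * h ^ 2 * x := by
          apply mul_le_mul_of_nonneg_left _ (by positivity)
          rw [hxdef]; linarith
  have htsmall : |t - 1| ≤ 1/2 := by
    have h2A : h ^ 2 * (2 * A) < K := (lt_div_iff₀ (by positivity)).mp hh2
    have : A / K * h ^ 2 ≤ 1/2 := by
      rw [div_mul_eq_mul_div, div_le_iff₀ hK]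
      nlinarith
    linarith
  have htmem : t ∈ Set.Icc (1/2:ℝ) (3/2) := by
    constructor <;> [nlinarith [abs_le.mp htsmall]; nlinarith [abs_le.mp htsmall]]
  refine ⟨t ^ β - 1, ?_, ?_⟩
  · have ht : t ^ β = y ^ β / x ^ β := Real.div_rpow (le_of_lt hy0) (le_of_lt hx0) β
    have hxβ : (0:ℝ) < x ^ β := Real.rpow_pos_of_pos hx0 β
    have hyβ : (0:ℝ) < y ^ β := Real.rpow_pos_of_pos hy0 β
    field_simp [ht]
    rw [add_sub_cancel, ht]; field_simp
  · calc |t ^ β - 1| ≤ C * |t - 1| := rpow_lip β hβ t htmem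
      _ ≤ C * (A / K * h ^ 2) := mul_le_mul_of_nonneg_left htsub hC0
      _ = C * A / K * h ^ 2 := by ring
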